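/- H¹_z(X) coincides with the space of restrictions to X of even functions in H¹(N): an integrable function f on X belongs to H¹_z(X) if and only if there exists F ∈ H¹(N) with F(−t,x) = F(t,x) for ν-almost every (t,x) ∈ N and F|_X = f. -/

import Mathlib

open MeasureTheory Metric Filter Set

noncomputable section

/-- The parabolic quasi-distance on `ℝ × E`. -/
def pdist {E : Type*} [MetricSpace E] (p q : ℝ × E) : ℝ :=
  max (Real.sqrt |p.1 - q.1|) (dist p.2 q.2)

/-- The open parabolic ball in `N = ℝ × E`. -/
def pball {E : Type*} [MetricSpace E] (c : ℝ × E) (r : ℝ) : Set (ℝ × E) :=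
  {p | pdist p c < r}

/-- The upper half space `X = (0,∞) × E` of `N = ℝ × E`. -/
def Xset (E : Type*) : Set (ℝ × E) := {p | 0 < p.1}

/-- The product measure `ν = Lebesgue ⊗ μ` on `N = ℝ × E`. -/
def pmeas {E : Type*} [MeasurableSpace E] (μ : Measure E) : Measure (ℝ × E) :=
  (volume : Measure ℝ).prod μ

/-- A `(1,2)`-atom on `N`: supported in a parabolic ball `Q`, mean value zero, and
`‖a‖_{L²(ν)} ≤ ν(Q)^{-1/2}`. -/
def IsAtom12 {E : Type*} [MetricSpace E] [MeasurableSpace E]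
    (μ : Measure E) (a : ℝ × E → ℝ) : Prop :=
  ∃ (c : ℝ × E) (r : ℝ), 0 < r ∧ Function.support a ⊆ pball c r ∧
    Integrable a (pmeas μ) ∧ (∫ p, a p ∂(pmeas μ)) = 0 ∧
    eLpNorm a 2 (pmeas μ) ≤ (pmeas μ (pball c r)) ^ (-(1:ℝ)/2)

/-- `f = Σ λ_i a_i` with convergence in `L¹(ρ)`. -/
def HasL1Decomp {E : Type*} [MeasurableSpace E] (ρ : Measure (ℝ × E))
    (f : ℝ × E → ℝ) (lam : ℕ → ℝ) (a : ℕ → ℝ × E → ℝ) : Prop :=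
  Summable (fun i => |lam i|) ∧
  Tendsto (fun k => eLpNorm (fun p => f p - ∑ i ∈ Finset.range k, lam i * a i p) 1 ρ)
    atTop (nhds 0)

/-- Membership in the atomic Hardy space `H¹(N)`. -/
def MemH1 {E : Type*} [MetricSpace E] [MeasurableSpace E]
    (μ : Measure E) (f : ℝ × E → ℝ) : Prop :=
  Integrable f (pmeas μ) ∧
  ∃ (lam : ℕ → ℝ) (a : ℕ → ℝ × E → ℝ), (∀ i, IsAtom12 μ (a i)) ∧
    HasL1Decomp (pmeas μ) f lam a

/-- The `H¹(N)` norm: infimum of `Σ |λ_i|` over all atomic decompositions. -/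
def H1norm {E : Type*} [MetricSpace E] [MeasurableSpace E]
    (μ : Measure E) (f : ℝ × E → ℝ) : ℝ :=
  sInf {c | ∃ (lam : ℕ → ℝ) (a : ℕ → ℝ × E → ℝ), (∀ i, IsAtom12 μ (a i)) ∧
    HasL1Decomp (pmeas μ) f lam a ∧ c = ∑' i, |lam i|}

/-- Membership in `H¹_r(X)`: `f ∈ L¹(X,ν)` is the restriction to `X` of some `F ∈ H¹(N)`. -/
def MemH1r {E : Type*} [MetricSpace E] [MeasurableSpace E]
    (μ : Measure E) (f : ℝ × E → ℝ) : Prop :=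
  IntegrableOn f (Xset E) (pmeas μ) ∧
  ∃ F : ℝ × E → ℝ, MemH1 μ F ∧ F =ᵐ[(pmeas μ).restrict (Xset E)] f

/-- The quotient norm on `H¹_r(X)`. -/
def H1rnorm {E : Type*} [MetricSpace E] [MeasurableSpace E]
    (μ : Measure E) (f : ℝ × E → ℝ) : ℝ :=
  sInf {c | ∃ F : ℝ × E → ℝ, MemH1 μ F ∧ F =ᵐ[(pmeas μ).restrict (Xset E)] f ∧
    c = H1norm μ F}

/-- Membership in `H¹_z(X)`: the extension of `f` by zero belongs to `H¹(N)`. -/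
def MemH1z {E : Type*} [MetricSpace E] [MeasurableSpace E]
    (μ : Measure E) (f : ℝ × E → ℝ) : Prop :=
  IntegrableOn f (Xset E) (pmeas μ) ∧ MemH1 μ ((Xset E).indicator f)

/-- The `H¹_z(X)` norm: the `H¹(N)` norm of the zero extension. -/
def H1znorm {E : Type*} [MetricSpace E] [MeasurableSpace E]
    (μ : Measure E) (f : ℝ × E → ℝ) : ℝ :=
  H1norm μ ((Xset E).indicator f)

namespace Stmt4Aux

set_option linter.unusedSectionVars false

variable {E : Type*} [MetricSpace E] [MeasurableSpace E] [BorelSpace E] {μ : Measure E}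

lemma measurableSet_Xset : MeasurableSet (Xset E) :=
  measurable_fst measurableSet_Ioi

lemma sigma_measurable : Measurable (fun p : ℝ × E => ((-p.1, p.2) : ℝ × E)) :=
  (measurable_fst.neg).prodMk measurable_snd

def sigmaEquiv (E : Type*) [MeasurableSpace E] : (ℝ × E) ≃ᵐ (ℝ × E) where
  toFun p := (-p.1, p.2)
  invFun p := (-p.1, p.2)
  left_inv p := by simp
  right_inv p := by simp
  measurable_toFun := (measurable_fst.neg).prodMk measurable_snd
  measurable_invFun := (measurable_fst.neg).prodMk measurable_snd

lemma sigmaMP [SigmaFinite μ] :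
    MeasurePreserving (fun p : ℝ × E => ((-p.1, p.2) : ℝ × E)) (pmeas μ) (pmeas μ) := by
  have h := (Measure.measurePreserving_neg (volume : Measure ℝ)).prod (MeasurePreserving.id μ)
  have he : (fun p : ℝ × E => ((-p.1, p.2) : ℝ × E)) = Prod.map (fun t : ℝ => -t) id := by
    funext p; rfl
  rw [he]; exact h

lemma eLpNorm_comp_sigma [SigmaFinite μ] {g : ℝ × E → ℝ} (q : ENNReal)
    (hg : AEStronglyMeasurable g (pmeas μ)) :
    eLpNorm (fun p : ℝ × E => g (-p.1, p.2)) q (pmeas μ) = eLpNorm g q (pmeas μ) :=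
  eLpNorm_comp_measurePreserving hg sigmaMP

lemma integrable_comp_sigma [SigmaFinite μ] {g : ℝ × E → ℝ} (hg : Integrable g (pmeas μ)) :
    Integrable (fun p : ℝ × E => g (-p.1, p.2)) (pmeas μ) :=
  (sigmaMP.integrable_comp hg.aestronglyMeasurable).mpr hg

lemma integral_comp_sigma [SigmaFinite μ] (g : ℝ × E → ℝ) :
    ∫ p : ℝ × E, g (-p.1, p.2) ∂(pmeas μ) = ∫ p, g p ∂(pmeas μ) :=
  sigmaMP.integral_comp (sigmaEquiv E).measurableEmbedding g

lemma pball_eq (c : ℝ × E) {r : ℝ} (hr : 0 < r) :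
    pball c r = Set.Ioo (c.1 - r^2) (c.1 + r^2) ×ˢ ball c.2 r := by
  ext p
  simp only [pball, pdist, Set.mem_setOf_eq, max_lt_iff, Set.mem_prod, Set.mem_Ioo, mem_ball]
  rw [Real.sqrt_lt' hr, abs_sub_lt_iff]
  constructor
  · rintro ⟨⟨h1, h2⟩, h3⟩; exact ⟨⟨by linarith, by linarith⟩, h3⟩
  · rintro ⟨⟨h1, h2⟩, h3⟩; exact ⟨⟨by linarith, by linarith⟩, h3⟩

lemma pmeas_pball [SigmaFinite μ] (c : ℝ × E) {r : ℝ} (hr : 0 < r) :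
    pmeas μ (pball c r) = ENNReal.ofReal (2 * r^2) * μ (ball c.2 r) := by
  rw [pball_eq c hr, pmeas, Measure.prod_prod, Real.volume_Ioo]
  congr 2
  ring

lemma null_time_zero [SigmaFinite μ] : pmeas μ {p : ℝ × E | p.1 = 0} = 0 := by
  have h : {p : ℝ × E | p.1 = 0} = ({(0:ℝ)} : Set ℝ) ×ˢ (Set.univ : Set E) := by
    ext p
    simp only [Set.mem_setOf_eq, Set.mem_prod, Set.mem_singleton_iff, Set.mem_univ, and_true]
  rw [h, pmeas, Measure.prod_prod]
  simp

end Stmt4Aux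

namespace Stmt4Aux2

open scoped ENNReal NNReal

open Stmt4Aux

set_option linter.unusedSectionVars false

variable {E : Type*} [MetricSpace E] [MeasurableSpace E] [BorelSpace E] {μ : Measure E}

lemma mem_pball_iff {c p : ℝ × E} {r : ℝ} (hr : 0 < r) :
    p ∈ pball c r ↔ |p.1 - c.1| < r^2 ∧ dist p.2 c.2 < r := by
  rw [pball_eq c hr]
  simp only [Set.mem_prod, Set.mem_Ioo, mem_ball, abs_sub_lt_iff]
  constructor
  · rintro ⟨⟨h1, h2⟩, h3⟩; exact ⟨⟨by linarith, by linarith⟩, h3⟩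
  · rintro ⟨⟨h1, h2⟩, h3⟩; exact ⟨⟨by linarith, by linarith⟩, h3⟩

lemma atom_comp_sigma [SigmaFinite μ] {a : ℝ × E → ℝ} (ha : IsAtom12 μ a) :
    IsAtom12 μ (fun p : ℝ × E => a (-p.1, p.2)) := by
  obtain ⟨c, r, hr, hsupp, hint, hzero, hL2⟩ := ha
  have hballs : pmeas μ (pball ((-c.1, c.2) : ℝ × E) r) = pmeas μ (pball c r) := by
    rw [pmeas_pball _ hr, pmeas_pball _ hr]
  refine ⟨(-c.1, c.2), r, hr, ?_, integrable_comp_sigma hint, ?_, ?_⟩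
  · intro p hp
    have h1 : ((-p.1, p.2) : ℝ × E) ∈ pball c r := hsupp hp
    rw [mem_pball_iff hr] at h1 ⊢
    dsimp only at h1 ⊢
    refine ⟨?_, h1.2⟩
    have he : p.1 - -c.1 = -(-p.1 - c.1) := by ring
    rw [he, abs_neg]
    exact h1.1
  · rw [integral_comp_sigma a]; exact hzero
  · rw [hballs, eLpNorm_comp_sigma 2 hint.aestronglyMeasurable]
    exact hL2

lemma atom_trunc [SigmaFinite μ] {a : ℝ × E → ℝ} (ha : IsAtom12 μ a) :
    IsAtom12 μ ((Xset E).indicator (fun p => (a p + a (-p.1, p.2)) / 2)) := by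
  obtain ⟨c, r, hr, hsupp, hint, hzero, hL2⟩ := ha
  set b : ℝ × E → ℝ := fun p => (a p + a (-p.1, p.2)) / 2 with hb
  have hbeven : ∀ p : ℝ × E, b (-p.1, p.2) = b p := by
    intro p; simp only [hb, neg_neg, Prod.mk.eta]; ring
  have hintσ : Integrable (fun p : ℝ × E => a (-p.1, p.2)) (pmeas μ) := integrable_comp_sigma hint
  have hbint : Integrable b (pmeas μ) := (hint.add hintσ).div_const 2
  have hindint : Integrable ((Xset E).indicator b) (pmeas μ) := hbint.indicator measurableSet_Xset
  refine ⟨(|c.1|, c.2), r, hr, ?_, hindint, ?_, ?_⟩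
  · -- support
    intro p hp
    have hpX : p ∈ Xset E := by
      by_contra h; rw [Function.mem_support, Set.indicator_of_notMem h] at hp; exact hp rfl
    have hp1 : (0:ℝ) < p.1 := hpX
    have hpb : b p ≠ 0 := by
      rw [Function.mem_support, Set.indicator_of_mem hpX] at hp; exact hp
    have hcases : a p ≠ 0 ∨ a (-p.1, p.2) ≠ 0 := by
      by_contra h
      push_neg at h
      exact hpb (by simp [hb, h.1, h.2])
    rw [mem_pball_iff hr]
    dsimp only
    rcases hcases with ha1 | ha2
    · have h1 := (mem_pball_iff hr).mp (hsupp ha1)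
      refine ⟨?_, h1.2⟩
      rw [abs_lt] at h1 ⊢
      obtain ⟨ha, hb'⟩ := h1.1.imp id id
      rcases le_or_gt 0 c.1 with hc | hc
      · rw [abs_of_nonneg hc]; exact ⟨ha, hb'⟩
      · rw [abs_of_neg hc]; constructor <;> linarith
    · have h1 := (mem_pball_iff hr).mp (hsupp ha2)
      dsimp only at h1
      refine ⟨?_, h1.2⟩
      have he : (-p.1 : ℝ) - c.1 = -(p.1 + c.1) := by ring
      have h2 : |p.1 + c.1| < r^2 := by rw [← abs_neg, ← he]; exact h1.1
      rw [abs_lt] at h2 ⊢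
      obtain ⟨ha, hb'⟩ := h2
      rcases le_or_gt 0 c.1 with hc | hc
      · rw [abs_of_nonneg hc]; constructor <;> linarith
      · rw [abs_of_neg hc]; constructor <;> linarith
  · -- mean zero
    rw [integral_indicator measurableSet_Xset]
    have hbzero : ∫ p, b p ∂(pmeas μ) = 0 := by
      have : ∫ p, b p ∂(pmeas μ)
          = (∫ p, a p ∂(pmeas μ) + ∫ p, a (-p.1, p.2) ∂(pmeas μ)) / 2 := by
        rw [← integral_add hint hintσ, ← integral_div]
      rw [this, integral_comp_sigma a, hzero]
      norm_num
    have hS : MeasurableSet {q : ℝ × E | q.1 < 0} := measurable_fst measurableSet_Iio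
    have hswap : ∫ p in {q : ℝ × E | q.1 < 0}, b p ∂(pmeas μ)
        = ∫ p in Xset E, b p ∂(pmeas μ) := by
      rw [← integral_indicator hS, ← integral_indicator measurableSet_Xset]
      have hcomp := integral_comp_sigma (μ := μ) ({q : ℝ × E | q.1 < 0}.indicator b)
      rw [← hcomp]
      congr 1
      funext p
      by_cases h : 0 < p.1
      · rw [Set.indicator_of_mem (show ((-p.1, p.2) : ℝ × E) ∈ {q : ℝ × E | q.1 < 0} by
          simpa using h), Set.indicator_of_mem (show p ∈ Xset E from h)]
        exact hbeven p
      · rw [Set.indicator_of_notMem (show ((-p.1, p.2) : ℝ × E) ∉ {q : ℝ × E | q.1 < 0} by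
          simpa using not_lt.mp h), Set.indicator_of_notMem (show p ∉ Xset E from h)]
    have hcompl : ∫ p in (Xset E)ᶜ, b p ∂(pmeas μ)
        = ∫ p in {q : ℝ × E | q.1 < 0}, b p ∂(pmeas μ) := by
      apply setIntegral_congr_set
      rw [MeasureTheory.ae_eq_set]
      constructor
      · refine measure_mono_null (fun p hp => ?_) (null_time_zero (μ := μ))
        simp only [Set.mem_diff, Set.mem_compl_iff, Set.mem_setOf_eq, Xset, not_lt] at hp
        exact le_antisymm hp.1 hp.2
      · refine measure_mono_null (fun p hp => ?_) (null_time_zero (μ := μ))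
        simp only [Set.mem_diff, Set.mem_compl_iff, Set.mem_setOf_eq, Xset, not_not] at hp
        exact absurd hp.2 (not_lt.mpr hp.1.le)
    have hsplit := integral_add_compl measurableSet_Xset hbint
    rw [hcompl, hswap, hbzero] at hsplit
    linarith
  · -- L² bound
    have hmono : eLpNorm ((Xset E).indicator b) 2 (pmeas μ) ≤ eLpNorm b 2 (pmeas μ) :=
      eLpNorm_mono fun p => norm_indicator_le_norm_self b p
    refine hmono.trans ?_
    have hballs : pmeas μ (pball ((|c.1|, c.2) : ℝ × E) r) = pmeas μ (pball c r) := by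
      rw [pmeas_pball _ hr, pmeas_pball _ hr]
    rw [hballs]
    have hb2 : b = (2⁻¹ : ℝ) • (a + fun p : ℝ × E => a (-p.1, p.2)) := by
      funext p
      simp only [hb, Pi.smul_apply, Pi.add_apply, smul_eq_mul]
      ring
    rw [hb2, eLpNorm_const_smul]
    have hadd := eLpNorm_add_le hint.aestronglyMeasurable hintσ.aestronglyMeasurable
      (by norm_num : (1:ℝ≥0∞) ≤ 2)
    have hσ : eLpNorm (fun p : ℝ × E => a (-p.1, p.2)) 2 (pmeas μ) = eLpNorm a 2 (pmeas μ) :=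
      eLpNorm_comp_sigma 2 hint.aestronglyMeasurable
    have hnn : ((‖(2⁻¹ : ℝ)‖₊ : ℝ≥0) : ℝ≥0∞) = 2⁻¹ := by
      rw [nnnorm_inv]
      simp
    calc ((‖(2⁻¹ : ℝ)‖₊ : ℝ≥0) : ℝ≥0∞)
          * eLpNorm (a + fun p : ℝ × E => a (-p.1, p.2)) 2 (pmeas μ)
        ≤ 2⁻¹ * (eLpNorm a 2 (pmeas μ) + eLpNorm (fun p : ℝ × E => a (-p.1, p.2)) 2 (pmeas μ)) := by
          rw [hnn]; exact mul_le_mul_right hadd _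
      _ = 2⁻¹ * (2 * eLpNorm a 2 (pmeas μ)) := by rw [hσ, two_mul]
      _ = eLpNorm a 2 (pmeas μ) := by
          rw [← mul_assoc, ENNReal.inv_mul_cancel (by norm_num) (by norm_num), one_mul]
      _ ≤ (pmeas μ (pball c r)) ^ (-(1:ℝ)/2) := hL2

end Stmt4Aux2

namespace Stmt4Aux3

open Stmt4Aux Stmt4Aux2
open scoped ENNReal NNReal

lemma sum_interleave (A B : ℕ → ℝ) (k : ℕ) :
    ∑ n ∈ Finset.range k, (if n % 2 = 0 then A (n / 2) else B (n / 2))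
      = (∑ i ∈ Finset.range ((k + 1) / 2), A i) + ∑ i ∈ Finset.range (k / 2), B i := by
  induction k with
  | zero => simp
  | succ k ih =>
    rw [Finset.sum_range_succ, ih]
    by_cases h : k % 2 = 0
    · rw [if_pos h, show (k + 1 + 1) / 2 = (k + 1) / 2 + 1 by omega,
        show (k + 1) / 2 = k / 2 by omega, Finset.sum_range_succ]
      ring
    · rw [if_neg h, show (k + 1 + 1) / 2 = (k + 1) / 2 by omega,
        show (k + 1) / 2 = k / 2 + 1 by omega, Finset.sum_range_succ, Finset.sum_range_succ]
      ring

lemma summable_half {lam : ℕ → ℝ} (h : Summable fun i => |lam i|) :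
    Summable (fun n => |lam (n / 2)|) := by
  apply summable_of_sum_range_le (c := (∑' i, |lam i|) + ∑' i, |lam i|)
    (fun n => abs_nonneg _)
  intro k
  have hs := sum_interleave (fun i => |lam i|) (fun i => |lam i|) k
  simp only [ite_self] at hs
  rw [hs]
  exact add_le_add (Summable.sum_le_tsum _ (fun i _ => abs_nonneg _) h)
    (Summable.sum_le_tsum _ (fun i _ => abs_nonneg _) h)

lemma tendsto_half : Tendsto (fun k : ℕ => k / 2) atTop atTop :=
  tendsto_atTop_atTop.mpr fun b => ⟨2 * b, fun n hn => by omega⟩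

lemma tendsto_half' : Tendsto (fun k : ℕ => (k + 1) / 2) atTop atTop :=
  tendsto_atTop_atTop.mpr fun b => ⟨2 * b, fun n hn => by omega⟩

end Stmt4Aux3

open Stmt4Aux Stmt4Aux2 Stmt4Aux3
open scoped ENNReal NNReal

/-- `H¹_z(X)` is the space of restrictions to `X` of even functions in `H¹(N)`:
an integrable `f` on `X` belongs to `H¹_z(X)` iff there is `F ∈ H¹(N)` with
`F(−t,x) = F(t,x)` for `ν`-a.e. `(t,x)` and `F|_X = f` (`ν`-a.e. on `X`). -/
theorem stmt4 {E : Type*} [MetricSpace E] [MeasurableSpace E] [BorelSpace E]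
    (μ : Measure E) (C_D : ℝ) (hCD : 1 ≤ C_D)
    (hvol : ∀ (x : E) (r : ℝ), 0 < r → 0 < μ (ball x r) ∧ μ (ball x r) < ⊤)
    (hdoub : ∀ (x : E) (r : ℝ), 0 < r →
      μ (ball x (2 * r)) ≤ ENNReal.ofReal C_D * μ (ball x r))
    (f : ℝ × E → ℝ) (hf : IntegrableOn f (Xset E) (pmeas μ)) :
    MemH1z μ f ↔
      ∃ F : ℝ × E → ℝ, MemH1 μ F ∧
        (∀ᵐ p ∂(pmeas μ), F (-p.1, p.2) = F p) ∧
        F =ᵐ[(pmeas μ).restrict (Xset E)] f := by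
  have hX : MeasurableSet (Xset E) := measurableSet_Xset
  haveI hSF : SigmaFinite μ := by
    rcases isEmpty_or_nonempty E with hE | hE
    · haveI : IsFiniteMeasure μ := by
        constructor
        rw [Set.univ_eq_empty_iff.mpr hE, measure_empty]
        exact ENNReal.zero_lt_top
      infer_instance
    · obtain ⟨x⟩ := hE
      apply Measure.sigmaFinite_of_countable
        (S := Set.range (fun n : ℕ => ball x (n + 1))) (Set.countable_range _)
      · rintro s ⟨n, rfl⟩
        exact (hvol x (n + 1) (by positivity)).2
      · rw [Set.sUnion_range]
        ext y
        simp only [Set.mem_iUnion, mem_ball, Set.mem_univ, iff_true]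
        obtain ⟨n, hn⟩ := exists_nat_gt (dist y x)
        exact ⟨n, by push_cast; linarith⟩
  constructor
  · -- forward direction
    rintro ⟨hfX, hgint, lam, a, hatoms, hsum, htend⟩
    have hgσint : Integrable (fun p : ℝ × E => (Xset E).indicator f (-p.1, p.2)) (pmeas μ) :=
      integrable_comp_sigma hgint
    refine ⟨fun p => (Xset E).indicator f p + (Xset E).indicator f (-p.1, p.2),
      ⟨hgint.add hgσint, ?_⟩, ?_, ?_⟩
    · -- atomic decomposition of F
      refine ⟨fun n => lam (n / 2),
        fun n => if n % 2 = 0 then a (n / 2) else (fun p => a (n / 2) (-p.1, p.2)),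
        fun i => ?_, summable_half hsum, ?_⟩
      · show IsAtom12 μ (if i % 2 = 0 then a (i / 2) else (fun p => a (i / 2) (-p.1, p.2)))
        by_cases h : i % 2 = 0
        · rw [if_pos h]; exact hatoms _
        · rw [if_neg h]; exact atom_comp_sigma (hatoms _)
      · -- L¹ convergence
        obtain ⟨w, hw⟩ : ∃ w : ℕ → (ℝ × E) → ℝ, w = fun m p =>
            (Xset E).indicator f p - ∑ i ∈ Finset.range m, lam i * a i p := ⟨_, rfl⟩
        have hPint : ∀ m, Integrable (w m) (pmeas μ) := by
          intro m
          rw [hw]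
          refine hgint.sub (integrable_finset_sum _ fun i _ => ?_)
          obtain ⟨c, r, _, _, hint, _, _⟩ := hatoms i
          exact hint.const_mul _
        have htendw : Tendsto (fun m => eLpNorm (w m) 1 (pmeas μ)) atTop (nhds 0) := by
          have : (fun m => eLpNorm (w m) 1 (pmeas μ))
              = (fun m => eLpNorm (fun p => (Xset E).indicator f p -
                  ∑ i ∈ Finset.range m, lam i * a i p) 1 (pmeas μ)) := by
            funext m; rw [hw]
          rw [this]
          exact htend
        have hkey : ∀ k, eLpNorm (fun p =>
            ((Xset E).indicator f p + (Xset E).indicator f (-p.1, p.2)) -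
            ∑ n ∈ Finset.range k, (fun n => lam (n / 2)) n *
              (fun n => if n % 2 = 0 then a (n / 2)
                else (fun p => a (n / 2) (-p.1, p.2))) n p) 1 (pmeas μ)
            ≤ eLpNorm (w ((k + 1) / 2)) 1 (pmeas μ) + eLpNorm (w (k / 2)) 1 (pmeas μ) := by
          intro k
          have hfun : (fun p =>
              ((Xset E).indicator f p + (Xset E).indicator f (-p.1, p.2)) -
              ∑ n ∈ Finset.range k, (fun n => lam (n / 2)) n *
                (fun n => if n % 2 = 0 then a (n / 2)
                  else (fun p => a (n / 2) (-p.1, p.2))) n p)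
              = (fun p => w ((k + 1) / 2) p + (fun q : ℝ × E => w (k / 2) q) (-p.1, p.2)) := by
            funext p
            have hsi := sum_interleave (fun i => lam i * a i p)
              (fun i => lam i * a i (-p.1, p.2)) k
            have hterm : ∀ n, (fun n => lam (n / 2)) n *
                (fun n => if n % 2 = 0 then a (n / 2)
                  else (fun p => a (n / 2) (-p.1, p.2))) n p
                = (if n % 2 = 0 then lam (n / 2) * a (n / 2) p
                    else lam (n / 2) * a (n / 2) (-p.1, p.2)) := by
              intro n
              by_cases h : n % 2 = 0
              · simp only [if_pos h]
              · simp only [if_neg h]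
            rw [Finset.sum_congr rfl (fun n _ => hterm n), hsi]
            have hw1 := congrFun (congrFun hw ((k + 1) / 2)) p
            have hw2 := congrFun (congrFun hw (k / 2)) ((-p.1, p.2) : ℝ × E)
            show _ = w ((k + 1) / 2) p + w (k / 2) ((-p.1, p.2) : ℝ × E)
            rw [hw1, hw2]
            ring
          rw [hfun]
          refine (eLpNorm_add_le (hPint _).aestronglyMeasurable
            (integrable_comp_sigma (hPint _)).aestronglyMeasurable le_rfl).trans ?_
          exact add_le_add le_rfl
            (eLpNorm_comp_sigma 1 (hPint _).aestronglyMeasurable).le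
        have htends : Tendsto (fun k =>
            eLpNorm (w ((k + 1) / 2)) 1 (pmeas μ) + eLpNorm (w (k / 2)) 1 (pmeas μ))
            atTop (nhds 0) := by
          have h1 := htendw.comp tendsto_half'
          have h2 := htendw.comp tendsto_half
          simp only [Function.comp_def] at h1 h2
          simpa using h1.add h2
        exact tendsto_of_tendsto_of_tendsto_of_le_of_le tendsto_const_nhds htends
          (fun k => zero_le) hkey
    · -- evenness
      refine ae_of_all _ fun p => ?_
      show (Xset E).indicator f (-p.1, p.2) + (Xset E).indicator f (- -p.1, p.2)
          = (Xset E).indicator f p + (Xset E).indicator f (-p.1, p.2)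
      rw [neg_neg]
      have hpe : ((p.1, p.2) : ℝ × E) = p := rfl
      rw [hpe]
      exact add_comm _ _
    · -- restriction to X
      refine (ae_restrict_iff' hX).mpr (ae_of_all _ fun p hp => ?_)
      show (Xset E).indicator f p + (Xset E).indicator f (-p.1, p.2) = f p
      have h1 : (Xset E).indicator f p = f p := Set.indicator_of_mem hp f
      have h2 : (Xset E).indicator f ((-p.1, p.2) : ℝ × E) = 0 := by
        apply Set.indicator_of_notMem
        have hp1 : (0:ℝ) < p.1 := hp
        simp only [Xset, Set.mem_setOf_eq, not_lt]
        linarith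
      rw [h1, h2, add_zero]
  · -- backward direction
    rintro ⟨F, ⟨hFint, lam, a, hatoms, hsum, htend⟩, hFeven, hFres⟩
    refine ⟨hf, hf.integrable_indicator hX, lam,
      fun i => (Xset E).indicator (fun p => (a i p + a i (-p.1, p.2)) / 2),
      fun i => atom_trunc (hatoms i), hsum, ?_⟩
    obtain ⟨w, hw⟩ : ∃ w : ℕ → (ℝ × E) → ℝ, w = fun m p =>
        F p - ∑ i ∈ Finset.range m, lam i * a i p := ⟨_, rfl⟩
    have hPint : ∀ m, Integrable (w m) (pmeas μ) := by
      intro m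
      rw [hw]
      refine hFint.sub (integrable_finset_sum _ fun i _ => ?_)
      obtain ⟨c, r, _, _, hint, _, _⟩ := hatoms i
      exact hint.const_mul _
    have htendw : Tendsto (fun m => eLpNorm (w m) 1 (pmeas μ)) atTop (nhds 0) := by
      have : (fun m => eLpNorm (w m) 1 (pmeas μ))
          = (fun m => eLpNorm (fun p => F p -
              ∑ i ∈ Finset.range m, lam i * a i p) 1 (pmeas μ)) := by
        funext m; rw [hw]
      rw [this]
      exact htend
    have hae : ∀ᵐ p ∂(pmeas μ), p ∈ Xset E → F p = f p := (ae_restrict_iff' hX).mp hFres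
    have hkey : ∀ k, eLpNorm (fun p => (Xset E).indicator f p -
        ∑ i ∈ Finset.range k, lam i *
          ((Xset E).indicator (fun p => (a i p + a i (-p.1, p.2)) / 2)) p) 1 (pmeas μ)
        ≤ eLpNorm (w k) 1 (pmeas μ) := by
      intro k
      have step1 : (fun p => (Xset E).indicator f p -
          ∑ i ∈ Finset.range k, lam i *
            ((Xset E).indicator (fun p => (a i p + a i (-p.1, p.2)) / 2)) p)
          =ᵐ[pmeas μ] (Xset E).indicator (fun q => F q -
              ∑ i ∈ Finset.range k, lam i * ((a i q + a i (-q.1, q.2)) / 2)) := by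
        filter_upwards [hae] with p hp
        by_cases hmem : p ∈ Xset E
        · rw [Set.indicator_of_mem hmem, Set.indicator_of_mem hmem, hp hmem]
          congr 1
          exact Finset.sum_congr rfl fun i _ => by rw [Set.indicator_of_mem hmem]
        · rw [Set.indicator_of_notMem hmem, Set.indicator_of_notMem hmem]
          rw [zero_sub, neg_eq_zero]
          refine Finset.sum_eq_zero fun i _ => ?_
          rw [Set.indicator_of_notMem hmem, mul_zero]
      rw [eLpNorm_congr_ae step1]
      refine le_trans (eLpNorm_mono fun p => norm_indicator_le_norm_self _ p) ?_
      have step2 : (fun q => F q -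
          ∑ i ∈ Finset.range k, lam i * ((a i q + a i (-q.1, q.2)) / 2))
          =ᵐ[pmeas μ] ((2⁻¹ : ℝ) • (w k)
            + (2⁻¹ : ℝ) • (fun p : ℝ × E => w k (-p.1, p.2))) := by
        filter_upwards [hFeven] with p hp
        have hw1 := congrFun (congrFun hw k) p
        have hw2 := congrFun (congrFun hw k) ((-p.1, p.2) : ℝ × E)
        show F p - ∑ i ∈ Finset.range k, lam i * ((a i p + a i (-p.1, p.2)) / 2)
          = 2⁻¹ * w k p + 2⁻¹ * w k ((-p.1, p.2) : ℝ × E)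
        rw [hw1, hw2, hp]
        rw [show ∑ i ∈ Finset.range k, lam i * ((a i p + a i (-p.1, p.2)) / 2)
            = (∑ i ∈ Finset.range k, (lam i * a i p + lam i * a i (-p.1, p.2))) / 2 from by
          rw [Finset.sum_div]; exact Finset.sum_congr rfl fun i _ => by ring]
        rw [Finset.sum_add_distrib]
        ring
      rw [eLpNorm_congr_ae step2]
      have hum : AEStronglyMeasurable (w k) (pmeas μ) := (hPint k).aestronglyMeasurable
      have humσ : AEStronglyMeasurable (fun p : ℝ × E => w k (-p.1, p.2)) (pmeas μ) :=
        (integrable_comp_sigma (hPint k)).aestronglyMeasurable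
      refine le_trans (eLpNorm_add_le (hum.const_smul _) (humσ.const_smul _) le_rfl) ?_
      rw [eLpNorm_const_smul, eLpNorm_const_smul, eLpNorm_comp_sigma 1 hum]
      have hnn : ((‖(2⁻¹ : ℝ)‖₊ : ℝ≥0) : ℝ≥0∞) = 2⁻¹ := by
        rw [nnnorm_inv]; simp
      rw [show ‖(2⁻¹ : ℝ)‖ₑ = 2⁻¹ from hnn, ← add_mul, ENNReal.inv_two_add_inv_two, one_mul]
    exact tendsto_of_tendsto_of_tendsto_of_le_of_le tendsto_const_nhds htendw
      (fun k => zero_le) hkey
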